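/- Let N be a non-compact C^∞ manifold and let p ≥ 1 be an integer. Then there exists a C^∞ map f : N → ℝ^p such that the set of critical values of f is dense in ℝ^p and such that the restriction of f to its set Σ of critical points is not a proper map; more precisely, there is a sequence (q_α)_{α∈ℕ} of critical points of f that leaves every compact subset of N (i.e., each compact subset of N contains only finitely many of the q_α) while the set {f(q_α) : α ∈ ℕ} is dense in ℝ^p. -/

import Mathlib

open Metric
open scoped Manifold

/-- On a non-compact manifold `N` there is a smooth map
`f : N → ℝ^p` whose critical values are dense in `ℝ^p` and whose restriction to
its critical set is not proper: there is a sequence of critical points leaving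
every compact set whose images are dense in `ℝ^p`. -/
theorem exists_smooth_map_with_dense_critical_values_not_proper
    {E : Type*} [NormedAddCommGroup E] [NormedSpace ℝ E] [FiniteDimensional ℝ E]
    {H : Type*} [TopologicalSpace H] (I : ModelWithCorners ℝ E H) [I.Boundaryless]
    {N : Type*} [TopologicalSpace N] [ChartedSpace H N] [IsManifold I (⊤ : ℕ∞) N]
    [T2Space N] [SecondCountableTopology N] [NoncompactSpace N]
    (p : ℕ) (hp : 1 ≤ p) :
    ∃ f : N → EuclideanSpace ℝ (Fin p),
      ContMDiff I 𝓘(ℝ, EuclideanSpace ℝ (Fin p)) (⊤ : ℕ∞) f ∧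
      Dense {y | ∃ q,
        LinearMap.rank (mfderiv I 𝓘(ℝ, EuclideanSpace ℝ (Fin p)) f q).toLinearMap
          < (p : Cardinal) ∧ f q = y} ∧
      ¬ IsProperMap
        ({q | LinearMap.rank
            (mfderiv I 𝓘(ℝ, EuclideanSpace ℝ (Fin p)) f q).toLinearMap
          < (p : Cardinal)}.restrict f) ∧
      ∃ q : ℕ → N,
        (∀ α, LinearMap.rank
            (mfderiv I 𝓘(ℝ, EuclideanSpace ℝ (Fin p)) f (q α)).toLinearMap
          < (p : Cardinal)) ∧
        (∀ K : Set N, IsCompact K → {α | q α ∈ K}.Finite) ∧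
        Dense (Set.range fun α => f (q α)) := by
  classical
  haveI : LocallyCompactSpace N := Manifold.locallyCompact_of_finiteDimensional I
  -- a smooth unbounded function g : N → ℝ
  let K : CompactExhaustion N := CompactExhaustion.choice N
  obtain ⟨g, hg⟩ : ∃ g : ContMDiffMap I (𝓘(ℝ, ℝ)) N ℝ (⊤ : ℕ∞), ∀ x, (K.find x : ℝ) < g x := by
    refine exists_contMDiffMap_forall_mem_convex_of_local_const I
      (t := fun x => Set.Ioi ((K.find x : ℝ))) (fun x => convex_Ioi _) fun x => ?_
    refine ⟨(K.find x : ℝ) + 2, ?_⟩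
    have hmem : interior (K (K.find x + 1)) ∈ nhds x :=
      (isOpen_interior.mem_nhds (K.subset_interior_succ _ (K.mem_find x)))
    filter_upwards [hmem] with z hz
    have hz' : K.find z ≤ K.find x + 1 :=
      K.mem_iff_find_le.1 (interior_subset hz)
    have : (K.find z : ℝ) ≤ (K.find x : ℝ) + 1 := by exact_mod_cast hz'
    simpa [Set.mem_Ioi] using this.trans_lt (by linarith)
  have hgc : Continuous g := g.contMDiff.continuous
  have hunb : ∀ M : ℝ, ∃ x : N, M < g x := by
    intro M
    obtain ⟨x, hx⟩ : ∃ x : N, x ∉ K ⌈M⌉₊ := by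
      have := (K.isCompact ⌈M⌉₊).ne_univ
      rcases Set.ne_univ_iff_exists_notMem _ |>.1 this with ⟨x, hx⟩
      exact ⟨x, hx⟩
    have h1 : ⌈M⌉₊ < K.find x := by
      by_contra hle
      exact hx (K.subset (not_lt.1 hle) (K.mem_find x))
    have : M ≤ (⌈M⌉₊ : ℝ) := Nat.le_ceil M
    refine ⟨x, lt_of_le_of_lt this (lt_trans ?_ (hg x))⟩
    exact_mod_cast h1
  -- points escaping to infinity along g
  have hxq : ∀ (x : N) (n : ℕ), ∃ x', max (g x + 1) ((n : ℝ) + 1) < g x' :=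
    fun x n => hunb _
  obtain ⟨q, hq0', hqs'⟩ : ∃ q : ℕ → N, (0 : ℝ) < g (q 0) ∧
      ∀ n, max (g (q n) + 1) ((n : ℝ) + 1) < g (q (n + 1)) :=
    ⟨fun n => Nat.rec (Classical.choose (hunb 0))
        (fun n xn => Classical.choose (hxq xn n)) n,
      Classical.choose_spec (hunb 0), fun n => Classical.choose_spec (hxq _ n)⟩
  set s : ℕ → ℝ := fun n => g (q n) with hs_def
  have hq0 : (0 : ℝ) < s 0 := hq0'
  have hqs : ∀ n, max (s n + 1) ((n : ℝ) + 1) < s (n + 1) := hqs'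
  have hs_gt : ∀ n : ℕ, (n : ℝ) < s n := by
    intro n
    cases n with
    | zero => simpa using hq0
    | succ n => exact lt_of_le_of_lt (by push_cast; exact le_max_right _ _) (hqs n)
  have hs_succ : ∀ n, s n + 1 < s (n + 1) := fun n =>
    lt_of_le_of_lt (le_max_left _ _) (hqs n)
  have hs_mono : StrictMono s :=
    strictMono_nat_of_lt_succ fun n => lt_trans (by linarith [hs_succ n]) (hs_succ n)
  have hs_gap : ∀ {a b : ℕ}, a < b → s a + 1 < s b := by
    intro a b hab
    exact (hs_succ a).trans_le (hs_mono.monotone hab)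
  -- dense sequence in ℝ^p
  obtain ⟨y, hy⟩ := TopologicalSpace.exists_dense_seq (EuclideanSpace ℝ (Fin p))
  -- bump function
  let c : ContDiffBump (0 : ℝ) := ⟨1/4, 1/2, by norm_num, by norm_num⟩
  let h : ℝ → (EuclideanSpace ℝ (Fin p)) := fun t => ∑ᶠ α, c (t - s α) • y α
  have hsupp : ∀ α, Function.support (fun t : ℝ => c (t - s α) • y α)
      ⊆ ball (s α) (1/2) := by
    intro α t ht
    have h1 : c (t - s α) ≠ 0 := by
      intro h0; apply ht; simp [h0]
    have h2 : t - s α ∈ Function.support c := h1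
    rw [c.support_eq] at h2
    have h3 : dist (t - s α) 0 < 1/2 := by simpa [c] using mem_ball.1 h2
    rw [Real.dist_eq, sub_zero] at h3
    rw [mem_ball, Real.dist_eq]
    exact h3
  have hloc : LocallyFinite fun α => Function.support (fun t : ℝ => c (t - s α) • y α) := by
    intro t
    refine ⟨ball t 1, ball_mem_nhds _ one_pos, ?_⟩
    refine Set.Finite.subset (Set.finite_Iio (⌈t + 2⌉₊)) ?_
    rintro α ⟨x, hx1, hx2⟩
    have h1 : x ∈ ball (s α) (1/2) := hsupp α hx1
    have h2 : |x - s α| < 1/2 := by rw [mem_ball, Real.dist_eq] at h1; exact h1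
    have h3 : |x - t| < 1 := by rw [mem_ball, Real.dist_eq] at hx2; exact hx2
    have h4 : (α : ℝ) < t + 2 := by
      have := hs_gt α
      have h2' := abs_lt.1 h2
      have h3' := abs_lt.1 h3
      linarith [h2'.1, h2'.2, h3'.1, h3'.2]
    exact Set.mem_Iio.2 (Nat.lt_ceil.2 h4)
  have hh : ContMDiff 𝓘(ℝ, ℝ) 𝓘(ℝ, (EuclideanSpace ℝ (Fin p))) (⊤ : ℕ∞) h := by
    refine contMDiff_finsum (fun α => ?_) hloc
    exact (((c.contDiff).comp (contDiff_id.sub contDiff_const)).smul contDiff_const).contMDiff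
  set f : N → (EuclideanSpace ℝ (Fin p)) := fun x => h (g x) with hf_def
  have hf_smooth : ContMDiff I 𝓘(ℝ, (EuclideanSpace ℝ (Fin p))) (⊤ : ℕ∞) f := hh.comp g.contMDiff
  -- local constancy near s β
  have hconst : ∀ β, ∀ t : ℝ, |t - s β| < 1/4 → h t = y β := by
    intro β t ht
    have key : ∀ α, α ≠ β → c (t - s α) • y α = 0 := by
      intro α hne
      have hzero : c (t - s α) = 0 := by
        apply c.zero_of_le_dist
        rw [Real.dist_eq, sub_zero]
        have hb := abs_lt.1 ht
        rcases lt_or_gt_of_ne hne with hlt | hgt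
        · have := hs_gap hlt
          have h1 : (1/2 : ℝ) ≤ t - s α := by linarith
          calc (1/2 : ℝ) ≤ t - s α := h1
            _ ≤ |t - s α| := le_abs_self _
        · have := hs_gap hgt
          have h1 : (1/2 : ℝ) ≤ s α - t := by linarith
          calc (1/2 : ℝ) ≤ s α - t := h1
            _ ≤ |s α - t| := le_abs_self _
            _ = |t - s α| := abs_sub_comm _ _
      simp [hzero]
    have := finsum_eq_single (fun α => c (t - s α) • y α) β key
    have hone : c (t - s β) = 1 := by
      apply c.one_of_mem_closedBall
      rw [mem_closedBall, Real.dist_eq, sub_zero]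
      exact le_of_lt (by simpa [c] using ht)
    show (∑ᶠ α, c (t - s α) • y α) = y β
    rw [this]
    simp only [hone, one_smul]
  have hfq : ∀ β, f (q β) = y β := by
    intro β
    exact hconst β (s β) (by simp)
  -- criticality
  have hcrit : ∀ β, mfderiv I 𝓘(ℝ, (EuclideanSpace ℝ (Fin p))) f (q β) = 0 := by
    intro β
    have heq : f =ᶠ[nhds (q β)] fun _ => y β := by
      have hUopen : IsOpen (g ⁻¹' (ball (s β) (1/4))) := isOpen_ball.preimage hgc
      have hUmem : q β ∈ g ⁻¹' (ball (s β) (1/4)) := by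
        simp [mem_ball, hs_def]
      filter_upwards [hUopen.mem_nhds hUmem] with x hx
      have : |g x - s β| < 1/4 := by rw [Set.mem_preimage, mem_ball, Real.dist_eq] at hx; exact hx
      exact hconst β (g x) this
    rw [heq.mfderiv_eq]
    show mfderiv I 𝓘(ℝ, (EuclideanSpace ℝ (Fin p))) (fun _ : N => y β) (q β) = 0
    exact mfderiv_const
  have hrank : ∀ β, LinearMap.rank (mfderiv I 𝓘(ℝ, (EuclideanSpace ℝ (Fin p))) f (q β)).toLinearMap
      < (p : Cardinal) := by
    intro β
    rw [hcrit β]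
    simp only [ContinuousLinearMap.coe_zero, LinearMap.rank_zero]
    exact_mod_cast Nat.pos_of_ne_zero (by omega)
  -- escape property
  have hescape : ∀ K' : Set N, IsCompact K' → {α | q α ∈ K'}.Finite := by
    intro K' hK'
    obtain ⟨M, hM⟩ := (hK'.image hgc).bddAbove
    refine Set.Finite.subset (Set.finite_Iio (⌈M⌉₊ + 1)) ?_
    intro α hα
    have h1 : s α ≤ M := hM (Set.mem_image_of_mem g hα)
    have h2 : (α : ℝ) < M := lt_of_lt_of_le (hs_gt α) h1
    have : (α : ℝ) ≤ (⌈M⌉₊ : ℝ) := le_trans (le_of_lt h2) (Nat.le_ceil M)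
    have : α ≤ ⌈M⌉₊ := by exact_mod_cast this
    exact Set.mem_Iio.2 (Nat.lt_succ_of_le this)
  refine ⟨f, hf_smooth, ?_, ?_, q, hrank, hescape, ?_⟩
  · -- dense critical values
    refine Dense.mono ?_ hy
    rintro _ ⟨β, rfl⟩
    exact ⟨q β, hrank β, hfq β⟩
  · -- not proper
    intro hprop
    haveI : Nontrivial (EuclideanSpace ℝ (Fin p)) := by
      apply Module.nontrivial_of_finrank_pos (R := ℝ)
      rw [finrank_euclideanSpace_fin]; omega
    haveI := Module.punctured_nhds_neBot ℝ (EuclideanSpace ℝ (Fin p)) (0 : (EuclideanSpace ℝ (Fin p)))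
    have hball_inf : (ball (0 : (EuclideanSpace ℝ (Fin p))) 1).Infinite :=
      infinite_of_mem_nhds (0 : (EuclideanSpace ℝ (Fin p))) (ball_mem_nhds _ one_pos)
    set Sig := {x : N | LinearMap.rank (mfderiv I 𝓘(ℝ, (EuclideanSpace ℝ (Fin p))) f x).toLinearMap < (p : Cardinal)}
    have hP : IsCompact (Sig.restrict f ⁻¹' closedBall 0 1) :=
      hprop.isCompact_preimage (isCompact_closedBall _ _)
    have hPim : IsCompact (Subtype.val '' (Sig.restrict f ⁻¹' closedBall 0 1)) :=
      hP.image continuous_subtype_val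
    have hfin := hescape _ hPim
    set T := {α : ℕ | y α ∈ ball (0 : (EuclideanSpace ℝ (Fin p))) 1} with hT_def
    have hTsub : T ⊆ {α | q α ∈ Subtype.val '' (Sig.restrict f ⁻¹' closedBall 0 1)} := by
      intro α hα
      refine ⟨⟨q α, hrank α⟩, ?_, rfl⟩
      simp only [Set.mem_preimage, Set.restrict_apply]
      show f (q α) ∈ _
      rw [hfq α]
      exact ball_subset_closedBall hα
    have hTfin : T.Finite := hfin.subset hTsub
    have hVopen : IsOpen (ball (0 : (EuclideanSpace ℝ (Fin p))) 1 \ y '' T) :=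
      isOpen_ball.sdiff (hTfin.image y).isClosed
    have hVne : (ball (0 : (EuclideanSpace ℝ (Fin p))) 1 \ y '' T).Nonempty :=
      (hball_inf.diff (hTfin.image y)).nonempty
    obtain ⟨α, hα⟩ := hy.exists_mem_open hVopen hVne
    exact hα.2 (Set.mem_image_of_mem y hα.1)
  · -- dense images
    have : (Set.range fun α => f (q α)) = Set.range y := by
      ext z; constructor
      · rintro ⟨α, rfl⟩; exact ⟨α, (hfq α).symm⟩
      · rintro ⟨α, rfl⟩; exact ⟨α, hfq α⟩
    rw [this]; exact hy
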